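/- If Σ is a negative theory (every clause has no positive literal), then for every nonnegative integer α the α-exterior σ_α(Σ) is Horn, i.e., mod(σ_α(Σ)) is closed under componentwise AND; hence σ_α(Σ)_e = σ_α(Σ). -/

import Mathlib

/-- Hamming distance between two 0/1 vectors. -/
def Hdist {n : ℕ} (v w : Fin n → Bool) : ℕ :=
  (Finset.univ.filter (fun i => v i ≠ w i)).card

/-- α-sigmaInt of a model set. -/
def sigmaInt {n : ℕ} (α : ℕ) (M : Set (Fin n → Bool)) : Set (Fin n → Bool) :=
  {v | ∀ w, Hdist v w ≤ α → w ∈ M}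

/-- α-sigmaExt of a model set. -/
def sigmaExt {n : ℕ} (α : ℕ) (M : Set (Fin n → Bool)) : Set (Fin n → Bool) :=
  {v | ∃ w ∈ M, Hdist v w ≤ α}

/-- A clause with positive index set `P` and negative index set `N`. -/
structure Clause (n : ℕ) where
  P : Finset (Fin n)
  N : Finset (Fin n)
  disj : Disjoint P N

/-- Satisfaction of a clause by an assignment. -/
def Clause.sat {n : ℕ} (c : Clause n) (v : Fin n → Bool) : Prop :=
  (∃ i ∈ c.P, v i = true) ∨ (∃ i ∈ c.N, v i = false)

/-- Closure of a set of models under componentwise AND. -/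
inductive ClAnd {n : ℕ} (S : Set (Fin n → Bool)) : (Fin n → Bool) → Prop
  | base {v : Fin n → Bool} : v ∈ S → ClAnd S v
  | and {u v : Fin n → Bool} : ClAnd S u → ClAnd S v → ClAnd S (fun i => u i && v i)

theorem stmt18 {n : ℕ} (α : ℕ) (T : Finset (Clause n))
    (hneg : ∀ c ∈ T, c.P = ∅) :
    (∀ u ∈ sigmaExt α {v | ∀ c ∈ T, c.sat v},
      ∀ w ∈ sigmaExt α {v | ∀ c ∈ T, c.sat v},
        (fun i => u i && w i) ∈ sigmaExt α {v | ∀ c ∈ T, c.sat v}) ∧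
    {w | ClAnd (sigmaExt α {v | ∀ c ∈ T, c.sat v}) w}
      = sigmaExt α {v | ∀ c ∈ T, c.sat v} := by
  have hclosed : ∀ u ∈ sigmaExt α {v | ∀ c ∈ T, c.sat v},
      ∀ w ∈ sigmaExt α {v | ∀ c ∈ T, c.sat v},
        (fun i => u i && w i) ∈ sigmaExt α {v | ∀ c ∈ T, c.sat v} := by
    intro u hu w hw
    obtain ⟨u', hu'M, hu'd⟩ := hu
    refine ⟨fun i => u' i && w i, ?_, ?_⟩
    · intro c hc
      rcases hu'M c hc with ⟨i, hi, _⟩ | ⟨i, hi, hfi⟩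
      · rw [hneg c hc] at hi; exact absurd hi (Finset.notMem_empty i)
      · exact Or.inr ⟨i, hi, by simp [hfi]⟩
    · refine le_trans (Finset.card_le_card ?_) hu'd
      intro i hi
      simp only [Finset.mem_filter, Finset.mem_univ, true_and] at hi ⊢
      intro h; exact hi (by rw [h])
  refine ⟨hclosed, ?_⟩
  ext v
  constructor
  · intro h
    induction h with
    | base hv => exact hv
    | and hu hw ihu ihw => exact hclosed _ ihu _ ihw
  · exact ClAnd.base
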